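/- Fix θ ∈ ℂ^M and set Θ = diagonal(θ). The function W ↦ J(W, θ) is ℝ-Fréchet differentiable at every W ≠ 0, and its conjugate Wirtinger gradient at W equals G_W = (2W/‖W‖_F²)·[ tr(Γ² f ȳ^T) − ‖Γ ȳ‖₂² ] + (2 M² N_BS / ‖W‖_F²) · B_G · ( I ∘ [ A_G^H Θ^H Ã^H Γ² Diag(ȳ − f) Ã Θ A_G ] ) · Λ B_G^H W, where ȳ = ȳ(W, θ); that is, for every direction Δ ∈ ℂ^{N_BS×N_d}, the Fréchet derivative of J(·, θ) at W in direction Δ equals 2 Re tr(Δ^H G_W). -/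

import Mathlib

open Matrix

attribute [local instance] Matrix.normedAddCommGroup Matrix.normedSpace

/-- Squared Frobenius norm of a complex matrix. -/
noncomputable def frobSq {m n : Type*} [Fintype m] [Fintype n]
    (W : Matrix m n ℂ) : ℝ :=
  ∑ i, ∑ j, Complex.normSq (W i j)

/-- The normalized average power pattern
`ȳ(W,θ) = diag( (M² N_BS/‖W‖_F²) · Ã Θ A_G ( I ∘ (Λ B_Gᴴ W Wᴴ B_G) ) A_Gᴴ Θᴴ Ãᴴ )`
(the diagonal entries are real; we take their real parts). -/
noncomputable def ybar (M NBS Nd L κM : ℕ)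
    (AG : Matrix (Fin M) (Fin L) ℂ) (BG : Matrix (Fin NBS) (Fin L) ℂ)
    (Atil : Matrix (Fin κM) (Fin M) ℂ) (Λ : Fin L → ℝ)
    (W : Matrix (Fin NBS) (Fin Nd) ℂ) (θ : Fin M → ℂ) : Fin κM → ℝ :=
  fun j =>
    ((M : ℝ) ^ 2 * NBS / frobSq W) *
      ((Atil * Matrix.diagonal θ * AG *
          Matrix.hadamard 1
            (Matrix.diagonal (fun l => (Λ l : ℂ)) * BGᴴ * W * Wᴴ * BG) *
          AGᴴ * (Matrix.diagonal θ)ᴴ * Atilᴴ) j j).re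

/-- The weighted pattern-synthesis cost `J(W,θ) = ‖Γ (f − ȳ(W,θ))‖₂²`, with
`Γ = Diag(γ)`. -/
noncomputable def costJ (M NBS Nd L κM : ℕ)
    (AG : Matrix (Fin M) (Fin L) ℂ) (BG : Matrix (Fin NBS) (Fin L) ℂ)
    (Atil : Matrix (Fin κM) (Fin M) ℂ) (Λ : Fin L → ℝ)
    (γ : Fin κM → ℝ) (f : Fin κM → ℝ)
    (W : Matrix (Fin NBS) (Fin Nd) ℂ) (θ : Fin M → ℂ) : ℝ :=
  ∑ j, (γ j * (f j - ybar M NBS Nd L κM AG BG Atil Λ W θ j)) ^ 2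

section AuxGrad

/-- CLM sending `W'` to the `(i,d)` entry of `A * W'`. -/
noncomputable def mulCLM {k m n : Type*} [Fintype k] [Fintype m] [Fintype n]
    (A : Matrix k m ℂ) (i : k) (d : n) : Matrix m n ℂ →L[ℝ] ℂ :=
  LinearMap.toContinuousLinearMap
    { toFun := fun W' => (A * W') i d
      map_add' := fun _ _ => by simp [Matrix.mul_apply, mul_add, Finset.sum_add_distrib]
      map_smul' := fun _ _ => by
        simp only [Matrix.mul_apply, Matrix.smul_apply, RingHom.id_apply, Finset.smul_sum,
          mul_smul_comm] }

@[simp] lemma mulCLM_apply {k m n : Type*} [Fintype k] [Fintype m] [Fintype n]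
    (A : Matrix k m ℂ) (i : k) (d : n) (X : Matrix m n ℂ) :
    mulCLM A i d X = (A * X) i d := rfl

/-- CLM sending `W'` to its `(i,d)` entry. -/
noncomputable def coordCLM {m n : Type*} [Fintype m] [Fintype n]
    (i : m) (d : n) : Matrix m n ℂ →L[ℝ] ℂ :=
  LinearMap.toContinuousLinearMap
    { toFun := fun W' => W' i d
      map_add' := fun _ _ => rfl
      map_smul' := fun _ _ => rfl }

@[simp] lemma coordCLM_apply {m n : Type*} [Fintype m] [Fintype n]
    (i : m) (d : n) (X : Matrix m n ℂ) : coordCLM i d X = X i d := rfl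

variable {E : Type*} [NormedAddCommGroup E] [NormedSpace ℝ E]

lemma hasFDerivAt_normSq_comp (T : E →L[ℝ] ℂ) (W : E) :
    HasFDerivAt (fun W' => Complex.normSq (T W'))
      ((2 * (T W).re) • (Complex.reCLM.comp T) + (2 * (T W).im) • (Complex.imCLM.comp T)) W := by
  have h1 : HasFDerivAt (fun W' : E => (T W').re) (Complex.reCLM.comp T) W :=
    (Complex.reCLM.comp T).hasFDerivAt
  have h2 : HasFDerivAt (fun W' : E => (T W').im) (Complex.imCLM.comp T) W :=
    (Complex.imCLM.comp T).hasFDerivAt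
  have h := (h1.mul h1).add (h2.mul h2)
  have hfn : (fun W' => Complex.normSq (T W')) =
      fun W' => (T W').re * (T W').re + (T W').im * (T W').im := by
    funext W'; rw [Complex.normSq_apply]
  rw [hfn]
  refine h.congr_fderiv ?_
  ext Δ
  simp
  ring

lemma hadamard_one_eq_diagonal {k : Type*} [Fintype k] [DecidableEq k] (X : Matrix k k ℂ) :
    Matrix.hadamard 1 X = Matrix.diagonal (fun a => X a a) := by
  ext a b
  by_cases h : a = b
  · subst h; simp [Matrix.hadamard_apply, Matrix.one_apply]
  · simp [Matrix.hadamard_apply, Matrix.one_apply, h, Matrix.diagonal_apply_ne _ h]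

lemma hadamard_one_CHdC {k L : Type*} [Fintype k] [Fintype L] [DecidableEq k] [DecidableEq L]
    (C : Matrix k L ℂ) (g : k → ℂ) :
    Matrix.hadamard 1 (Cᴴ * Matrix.diagonal g * C) =
      Matrix.diagonal (fun l => ∑ j, g j * (Complex.normSq (C j l) : ℂ)) := by
  rw [hadamard_one_eq_diagonal]
  have : (fun a => (Cᴴ * Matrix.diagonal g * C) a a) =
      (fun l => ∑ j, g j * (Complex.normSq (C j l) : ℂ)) := by
    funext l
    rw [Matrix.mul_apply]
    refine Finset.sum_congr rfl fun j _ => ?_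
    rw [Matrix.mul_diagonal, Matrix.conjTranspose_apply]
    have h : star (C j l) * g j * C j l = g j * (C j l * (starRingEnd ℂ) (C j l)) := by
      simp only [Complex.star_def]; ring
    rw [h, Complex.mul_conj]
  rw [this]

lemma re_trace_CH_mul {m n : Type*} [Fintype m] [Fintype n]
    (Δ W : Matrix m n ℂ) :
    (Matrix.trace (Δᴴ * W)).re =
      ∑ i, ∑ d, ((W i d).re * (Δ i d).re + (W i d).im * (Δ i d).im) := by
  rw [Matrix.trace]
  simp only [Matrix.diag, Matrix.mul_apply, Matrix.conjTranspose_apply]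
  rw [Complex.re_sum]
  rw [Finset.sum_comm]
  refine Finset.sum_congr rfl fun i _ => ?_
  rw [Complex.re_sum]
  refine Finset.sum_congr rfl fun d _ => ?_
  simp [Complex.mul_re, Complex.conj_re, Complex.conj_im]
  ring

lemma re_trace_diag {L n : Type*} [Fintype L] [Fintype n] [DecidableEq L]
    (X Y : Matrix L n ℂ) (v : L → ℝ) :
    (Matrix.trace (Xᴴ * (Matrix.diagonal (fun l => (v l : ℂ)) * Y))).re =
      ∑ l, v l * ∑ d, ((Y l d).re * (X l d).re + (Y l d).im * (X l d).im) := by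
  rw [re_trace_CH_mul]
  refine Finset.sum_congr rfl fun l _ => ?_
  rw [Finset.mul_sum]
  refine Finset.sum_congr rfl fun d _ => ?_
  rw [Matrix.diagonal_mul]
  simp [Complex.mul_re, Complex.mul_im, Complex.ofReal_re, Complex.ofReal_im]
  ring

lemma ybar_eq (M NBS Nd L κM : ℕ) (AG : Matrix (Fin M) (Fin L) ℂ)
    (BG : Matrix (Fin NBS) (Fin L) ℂ) (Atil : Matrix (Fin κM) (Fin M) ℂ)
    (Λ : Fin L → ℝ) (W : Matrix (Fin NBS) (Fin Nd) ℂ) (θ : Fin M → ℂ) (j : Fin κM) :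
    ybar M NBS Nd L κM AG BG Atil Λ W θ j =
      ((M : ℝ) ^ 2 * NBS) *
        (∑ l, (Λ l * Complex.normSq ((Atil * Matrix.diagonal θ * AG) j l)) *
          ∑ d, Complex.normSq ((BGᴴ * W) l d)) * (frobSq W)⁻¹ := by
  set C := Atil * Matrix.diagonal θ * AG with hC
  set V := BGᴴ * W with hV
  set dv : Fin L → ℂ := fun a => (Λ a : ℂ) * ∑ d, (V a d * (starRingEnd ℂ) (V a d)) with hdv
  have hX : Matrix.diagonal (fun l => (Λ l:ℂ)) * BGᴴ * W * Wᴴ * BG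
      = Matrix.diagonal (fun l => (Λ l:ℂ)) * (V * Vᴴ) := by
    rw [hV]
    simp [Matrix.conjTranspose_mul, Matrix.mul_assoc]
  have hdiag : (fun a => (Matrix.diagonal (fun l => (Λ l:ℂ)) * (V * Vᴴ)) a a) = dv := by
    funext a
    rw [Matrix.diagonal_mul, Matrix.mul_apply]
    simp [Matrix.conjTranspose_apply, hdv]
  have hM : Atil * Matrix.diagonal θ * AG *
      Matrix.hadamard 1 (Matrix.diagonal (fun l => (Λ l:ℂ)) * BGᴴ * W * Wᴴ * BG) *
      AGᴴ * (Matrix.diagonal θ)ᴴ * Atilᴴ = C * Matrix.diagonal dv * Cᴴ := by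
    rw [hX, hadamard_one_eq_diagonal]
    rw [hdiag, hC]
    simp [Matrix.conjTranspose_mul, Matrix.mul_assoc]
  rw [ybar, hM]
  have hterm : ∀ l, (C * Matrix.diagonal dv) j l * Cᴴ l j =
      ((Λ l * Complex.normSq (C j l) * ∑ d, Complex.normSq (V l d) : ℝ) : ℂ) := by
    intro l
    rw [Matrix.mul_diagonal, Matrix.conjTranspose_apply]
    have h1 : C j l * dv l * star (C j l) = (C j l * (starRingEnd ℂ) (C j l)) * dv l := by
      simp only [Complex.star_def]; ring
    rw [h1, Complex.mul_conj, hdv]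
    simp only [Complex.mul_conj]
    push_cast
    ring
  have hre : ((C * Matrix.diagonal dv * Cᴴ) j j).re =
      ∑ l, Λ l * Complex.normSq (C j l) * ∑ d, Complex.normSq (V l d) := by
    rw [Matrix.mul_apply]
    rw [Complex.re_sum]
    refine Finset.sum_congr rfl fun l _ => ?_
    rw [hterm l, Complex.ofReal_re]
  rw [hre]
  rw [div_eq_mul_inv]
  ring

lemma frobSq_pos {m n : Type*} [Fintype m] [Fintype n]
    {W : Matrix m n ℂ} (hW : W ≠ 0) : 0 < frobSq W := by
  rcases lt_or_eq_of_le (show (0:ℝ) ≤ frobSq W from Finset.sum_nonneg fun i _ =>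
    Finset.sum_nonneg fun d _ => Complex.normSq_nonneg _) with h | h
  · exact h
  · exfalso
    apply hW
    ext i d
    have h1 : ∀ i ∈ Finset.univ, (0:ℝ) ≤ ∑ j, Complex.normSq (W i j) := fun i _ =>
      Finset.sum_nonneg fun d _ => Complex.normSq_nonneg _
    have h2 := (Finset.sum_eq_zero_iff_of_nonneg h1).1 h.symm i (Finset.mem_univ i)
    have h3 := (Finset.sum_eq_zero_iff_of_nonneg (fun d _ => Complex.normSq_nonneg _)).1 h2
      d (Finset.mem_univ d)
    simpa [Complex.normSq_eq_zero] using h3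

end AuxGrad

/-- For fixed `θ`, the map `W ↦ J(W,θ)` is ℝ-Fréchet differentiable at
every `W ≠ 0`, with conjugate Wirtinger gradient
`G_W = (2W/‖W‖_F²)[tr(Γ² f ȳᵀ) − ‖Γȳ‖₂²]
      + (2M²N_BS/‖W‖_F²) B_G (I ∘ [A_Gᴴ Θᴴ Ãᴴ Γ² Diag(ȳ−f) Ã Θ A_G]) Λ B_Gᴴ W`,
i.e. the derivative in direction `Δ` equals `2 Re tr(Δᴴ G_W)`. -/
theorem stmt1 (M NBS Nd L κM : ℕ) (hM : 0 < M) (hNBS : 0 < NBS) (hNd : 0 < Nd)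
    (hL : 0 < L) (hκM : 0 < κM)
    (AG : Matrix (Fin M) (Fin L) ℂ) (BG : Matrix (Fin NBS) (Fin L) ℂ)
    (Atil : Matrix (Fin κM) (Fin M) ℂ) (Λ : Fin L → ℝ) (hΛ : ∀ l, 0 ≤ Λ l)
    (γ : Fin κM → ℝ) (hγ : ∀ j, 0 ≤ γ j) (f : Fin κM → ℝ)
    (θ : Fin M → ℂ)
    (W : Matrix (Fin NBS) (Fin Nd) ℂ) (hW : W ≠ 0) :
    ∃ D : Matrix (Fin NBS) (Fin Nd) ℂ →L[ℝ] ℝ,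
      HasFDerivAt (fun W' => costJ M NBS Nd L κM AG BG Atil Λ γ f W' θ) D W ∧
        ∀ Δ : Matrix (Fin NBS) (Fin Nd) ℂ,
          D Δ =
            2 * (Matrix.trace (Δᴴ *
              (((2 / frobSq W) *
                  ((∑ j, (γ j) ^ 2 * f j * ybar M NBS Nd L κM AG BG Atil Λ W θ j) -
                    ∑ j, (γ j) ^ 2 * (ybar M NBS Nd L κM AG BG Atil Λ W θ j) ^ 2)) • W +
                ((2 * (M : ℝ) ^ 2 * NBS / frobSq W) •
                  (BG *
                    Matrix.hadamard 1
                      (AGᴴ * (Matrix.diagonal θ)ᴴ * Atilᴴ *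
                        Matrix.diagonal (fun j => ((γ j) ^ 2 : ℂ)) *
                        Matrix.diagonal
                          (fun j => ((ybar M NBS Nd L κM AG BG Atil Λ W θ j - f j : ℝ) : ℂ)) *
                        Atil * Matrix.diagonal θ * AG) *
                    Matrix.diagonal (fun l => (Λ l : ℂ)) * BGᴴ * W))))).re := by
  classical
  set C : Matrix (Fin κM) (Fin L) ℂ := Atil * Matrix.diagonal θ * AG with hCdef
  set c : ℝ := (M : ℝ) ^ 2 * NBS with hcdef
  set w : Fin κM → Fin L → ℝ := fun j l => Λ l * Complex.normSq (C j l) with hwdef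
  set s : ℝ := frobSq W with hsdef
  have hs0 : s ≠ 0 := ne_of_gt (frobSq_pos hW)
  set yb : Fin κM → ℝ := ybar M NBS Nd L κM AG BG Atil Λ W θ with hybdef
  set ρ : Fin κM → Matrix (Fin NBS) (Fin Nd) ℂ → ℝ :=
    fun j W' => ∑ l, w j l * ∑ d, Complex.normSq ((BGᴴ * W') l d) with hρdef
  have hyW : ∀ j, yb j = c * ρ j W * s⁻¹ := by
    intro j
    rw [hybdef, ybar_eq]
  -- derivative building blocks
  set DnormSq : Fin L → Fin Nd → (Matrix (Fin NBS) (Fin Nd) ℂ →L[ℝ] ℝ) := fun l d =>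
    (2 * ((BGᴴ * W) l d).re) • (Complex.reCLM.comp (mulCLM BGᴴ l d)) +
      (2 * ((BGᴴ * W) l d).im) • (Complex.imCLM.comp (mulCLM BGᴴ l d)) with hDnormSqdef
  have hnsq : ∀ l d, HasFDerivAt (fun W' : Matrix (Fin NBS) (Fin Nd) ℂ => Complex.normSq ((BGᴴ * W') l d))
      (DnormSq l d) W := fun l d => hasFDerivAt_normSq_comp (mulCLM BGᴴ l d) W
  have hρd : ∀ j, HasFDerivAt (ρ j) (∑ l, w j l • ∑ d, DnormSq l d) W := by
    intro j
    exact HasFDerivAt.fun_sum fun l _ =>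
      (HasFDerivAt.fun_sum fun d _ => hnsq l d).const_mul (w j l)
  set Ds : Matrix (Fin NBS) (Fin Nd) ℂ →L[ℝ] ℝ := ∑ i, ∑ d,
    ((2 * (W i d).re) • (Complex.reCLM.comp (coordCLM i d)) +
      (2 * (W i d).im) • (Complex.imCLM.comp (coordCLM i d))) with hDsdef
  have hsd : HasFDerivAt (fun W' : Matrix (Fin NBS) (Fin Nd) ℂ => frobSq W') Ds W := by
    exact HasFDerivAt.fun_sum fun i _ =>
      HasFDerivAt.fun_sum fun d _ => hasFDerivAt_normSq_comp (coordCLM i d) W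
  have hinv : HasFDerivAt (fun W' : Matrix (Fin NBS) (Fin Nd) ℂ => (frobSq W')⁻¹) (-((s ^ 2)⁻¹ • Ds)) W := by
    have := (hasDerivAt_inv hs0).comp_hasFDerivAt W hsd
    refine this.congr_fderiv ?_
    exact neg_smul _ _
  have hy : ∀ j, HasFDerivAt (fun W' : Matrix (Fin NBS) (Fin Nd) ℂ => c * ρ j W' * (frobSq W')⁻¹)
      ((c * ρ j W) • (-((s ^ 2)⁻¹ • Ds)) + (frobSq W)⁻¹ • (c • (∑ l, w j l • ∑ d, DnormSq l d))) W :=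
    fun j => ((hρd j).const_mul c).mul hinv
  have hterm : ∀ j, HasFDerivAt
      (fun W' : Matrix (Fin NBS) (Fin Nd) ℂ => γ j * (f j - c * ρ j W' * (frobSq W')⁻¹))
      (γ j • (-(((c * ρ j W) • (-((s ^ 2)⁻¹ • Ds)) +
        (frobSq W)⁻¹ • (c • (∑ l, w j l • ∑ d, DnormSq l d)))))) W :=
    fun j => ((hy j).const_sub (f j)).const_mul (γ j)
  have hcost : (fun W' => costJ M NBS Nd L κM AG BG Atil Λ γ f W' θ)
      = fun W' : Matrix (Fin NBS) (Fin Nd) ℂ => ∑ j, (γ j * (f j - c * ρ j W' * (frobSq W')⁻¹)) *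
          (γ j * (f j - c * ρ j W' * (frobSq W')⁻¹)) := by
    funext W'
    rw [costJ]
    refine Finset.sum_congr rfl fun j _ => ?_
    rw [ybar_eq, pow_two]
  rw [hcost]
  have hJ : HasFDerivAt (fun W' : Matrix (Fin NBS) (Fin Nd) ℂ => ∑ j, (γ j * (f j - c * ρ j W' * (frobSq W')⁻¹)) *
        (γ j * (f j - c * ρ j W' * (frobSq W')⁻¹)))
      (∑ j, ((γ j * (f j - c * ρ j W * (frobSq W)⁻¹)) •
          (γ j • -((c * ρ j W) • -((s ^ 2)⁻¹ • Ds) + (frobSq W)⁻¹ • c • ∑ l, w j l • ∑ d, DnormSq l d)) +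
        (γ j * (f j - c * ρ j W * (frobSq W)⁻¹)) •
          (γ j • -((c * ρ j W) • -((s ^ 2)⁻¹ • Ds) + (frobSq W)⁻¹ • c • ∑ l, w j l • ∑ d, DnormSq l d)))) W :=
    HasFDerivAt.fun_sum (u := Finset.univ) fun (j : Fin κM) _ => (hterm j).mul (hterm j)
  refine ⟨_, hJ, fun Δ => ?_⟩
  simp only [ContinuousLinearMap.coe_sum', Finset.sum_apply, ContinuousLinearMap.add_apply,
    ContinuousLinearMap.coe_smul', Pi.smul_apply, ContinuousLinearMap.neg_apply,
    ContinuousLinearMap.comp_apply, mulCLM_apply, coordCLM_apply, Complex.reCLM_apply,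
    Complex.imCLM_apply, smul_eq_mul, Pi.neg_apply]
  rw [← hsdef]
  -- canonical real quantities
  set q : ℝ := ∑ i, ∑ d, ((W i d).re * (Δ i d).re + (W i d).im * (Δ i d).im) with hqdef
  set P : Fin L → ℝ := fun l => ∑ d, (((BGᴴ * W) l d).re * ((BGᴴ * Δ) l d).re +
    ((BGᴴ * W) l d).im * ((BGᴴ * Δ) l d).im) with hPdef
  set hv : Fin L → ℝ :=
    fun l => (∑ j, γ j ^ 2 * (yb j - f j) * Complex.normSq (C j l)) * Λ l with hvdef
  have hcρ : ∀ j, c * ρ j W = yb j * s := by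
    intro j; rw [hyW j]; field_simp
  have hDsΔ : Ds Δ = 2 * q := by
    rw [hDsdef]
    simp only [ContinuousLinearMap.coe_sum', Finset.sum_apply, ContinuousLinearMap.add_apply,
      ContinuousLinearMap.coe_smul', Pi.smul_apply, ContinuousLinearMap.comp_apply,
      coordCLM_apply, Complex.reCLM_apply, Complex.imCLM_apply, smul_eq_mul]
    rw [hqdef, Finset.mul_sum]
    refine Finset.sum_congr rfl fun i _ => ?_
    rw [Finset.mul_sum]
    exact Finset.sum_congr rfl fun d _ => by ring
  have hDnΔ : ∀ l, ∑ d, (DnormSq l d) Δ = 2 * P l := by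
    intro l
    simp only [hDnormSqdef, ContinuousLinearMap.add_apply, ContinuousLinearMap.coe_smul',
      Pi.smul_apply, ContinuousLinearMap.comp_apply, mulCLM_apply, Complex.reCLM_apply,
      Complex.imCLM_apply, smul_eq_mul]
    rw [hPdef]
    simp only []
    rw [Finset.mul_sum]
    exact Finset.sum_congr rfl fun d _ => by ring
  have hsum4 : ∀ j, ∑ l, w j l * ∑ d, (DnormSq l d) Δ = 2 * ∑ l, w j l * P l := by
    intro j
    rw [Finset.mul_sum]
    refine Finset.sum_congr rfl fun l _ => ?_
    rw [hDnΔ l]; ring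
  -- reduce the left-hand side
  have hL1 : ∑ x : Fin κM,
      (γ x * (f x - c * ρ x W * s⁻¹) *
          (γ x * -(c * ρ x W * -((s ^ 2)⁻¹ * Ds Δ) +
              s⁻¹ * (c * ∑ l, w x l * ∑ d, (DnormSq l d) Δ))) +
        γ x * (f x - c * ρ x W * s⁻¹) *
          (γ x * -(c * ρ x W * -((s ^ 2)⁻¹ * Ds Δ) +
              s⁻¹ * (c * ∑ l, w x l * ∑ d, (DnormSq l d) Δ)))) =
      ∑ j, ((4 * γ j ^ 2 * (f j - yb j) * yb j * s⁻¹) * q -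
        (4 * γ j ^ 2 * (f j - yb j) * c * s⁻¹) * ∑ l, w j l * P l) := by
    refine Finset.sum_congr rfl fun j _ => ?_
    rw [hDsΔ, hsum4 j, hcρ j]
    field_simp
    ring
  rw [hL1]
  -- reduce the right-hand side trace
  have hhad : AGᴴ * (Matrix.diagonal θ)ᴴ * Atilᴴ * Matrix.diagonal (fun j => ((γ j) ^ 2 : ℂ)) *
      Matrix.diagonal (fun j => ((yb j - f j : ℝ) : ℂ)) * Atil * Matrix.diagonal θ * AG =
      Cᴴ * Matrix.diagonal (fun j => ((γ j : ℂ)) ^ 2 * ((yb j - f j : ℝ) : ℂ)) * C := by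
    rw [hCdef]
    simp [Matrix.conjTranspose_mul, Matrix.mul_assoc, Matrix.diagonal_mul_diagonal]
  have hd : Matrix.diagonal (fun l => ∑ j, ((γ j : ℂ)) ^ 2 * ((yb j - f j : ℝ) : ℂ) *
        (Complex.normSq (C j l) : ℂ)) * Matrix.diagonal (fun l => (Λ l : ℂ)) =
      Matrix.diagonal (fun l => ((hv l : ℝ) : ℂ)) := by
    rw [Matrix.diagonal_mul_diagonal]
    congr 1
    funext l
    rw [hvdef]
    push_cast
    rfl
  have hKB : BG * Matrix.hadamard 1
        (AGᴴ * (Matrix.diagonal θ)ᴴ * Atilᴴ * Matrix.diagonal (fun j => ((γ j) ^ 2 : ℂ)) *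
          Matrix.diagonal (fun j => ((yb j - f j : ℝ) : ℂ)) * Atil * Matrix.diagonal θ * AG) *
        Matrix.diagonal (fun l => (Λ l : ℂ)) * BGᴴ * W =
      BG * (Matrix.diagonal (fun l => ((hv l : ℝ) : ℂ)) * (BGᴴ * W)) := by
    rw [hhad, hadamard_one_CHdC]
    rw [show BG * Matrix.diagonal (fun l => ∑ j, ((γ j : ℂ)) ^ 2 * ((yb j - f j : ℝ) : ℂ) *
          (Complex.normSq (C j l) : ℂ)) * Matrix.diagonal (fun l => (Λ l : ℂ)) * BGᴴ * W =
        BG * ((Matrix.diagonal (fun l => ∑ j, ((γ j : ℂ)) ^ 2 * ((yb j - f j : ℝ) : ℂ) *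
          (Complex.normSq (C j l) : ℂ)) * Matrix.diagonal (fun l => (Λ l : ℂ))) * (BGᴴ * W))
      from by simp [Matrix.mul_assoc]]
    rw [hd]
  rw [hKB]
  have h1 : (Matrix.trace (Δᴴ * W)).re = q := by
    rw [hqdef]; exact re_trace_CH_mul Δ W
  have h2 : (Matrix.trace (Δᴴ * (BG * (Matrix.diagonal (fun l => ((hv l : ℝ) : ℂ)) *
      (BGᴴ * W))))).re = ∑ l, hv l * P l := by
    rw [show Δᴴ * (BG * (Matrix.diagonal (fun l => ((hv l : ℝ) : ℂ)) * (BGᴴ * W))) =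
        (BGᴴ * Δ)ᴴ * (Matrix.diagonal (fun l => ((hv l : ℝ) : ℂ)) * (BGᴴ * W)) from by
      simp [Matrix.conjTranspose_mul, Matrix.mul_assoc]]
    rw [hPdef]
    exact re_trace_diag (BGᴴ * Δ) (BGᴴ * W) hv
  rw [Matrix.mul_add, Matrix.mul_smul, Matrix.mul_smul, Matrix.trace_add, Matrix.trace_smul,
    Matrix.trace_smul, Complex.add_re, Complex.smul_re, Complex.smul_re, h1, h2,
    smul_eq_mul, smul_eq_mul]
  -- final scalar identity
  have e1 : ∑ j, (4 * γ j ^ 2 * (f j - yb j) * yb j * s⁻¹) * q =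
      (2 * (2 / s * (∑ j, γ j ^ 2 * f j * yb j - ∑ j, γ j ^ 2 * yb j ^ 2))) * q := by
    rw [← Finset.sum_mul]
    congr 1
    rw [← Finset.sum_sub_distrib, Finset.mul_sum, Finset.mul_sum]
    exact Finset.sum_congr rfl fun j _ => by field_simp; ring
  have e2 : ∀ l, ∑ j, (4 * γ j ^ 2 * (f j - yb j) * c * s⁻¹) * (w j l * P l) =
      -((2 * (2 * (M:ℝ) ^ 2 * NBS / s)) * (hv l * P l)) := by
    intro l
    simp only [hwdef, hvdef, hcdef]
    rw [Finset.sum_mul, Finset.sum_mul, Finset.mul_sum, ← Finset.sum_neg_distrib]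
    exact Finset.sum_congr rfl fun j _ => by field_simp; ring
  have h3 : ∑ j, (4 * γ j ^ 2 * (f j - yb j) * c * s⁻¹) * ∑ l, w j l * P l =
      ∑ l, ∑ j, (4 * γ j ^ 2 * (f j - yb j) * c * s⁻¹) * (w j l * P l) := by
    rw [Finset.sum_comm]
    exact Finset.sum_congr rfl fun j _ => by rw [Finset.mul_sum]
  rw [Finset.sum_sub_distrib, e1, h3]
  have h4 : ∑ l, ∑ j, (4 * γ j ^ 2 * (f j - yb j) * c * s⁻¹) * (w j l * P l) =
      -((2 * (2 * (M:ℝ) ^ 2 * NBS / s)) * ∑ l, hv l * P l) := by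
    rw [Finset.mul_sum, ← Finset.sum_neg_distrib]
    exact Finset.sum_congr rfl fun l _ => e2 l
  rw [h4]
  ring
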